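/- arXiv:0808.0431 — 2 statements merged into one kernel-verified Lean document; each statement's English description precedes it below -/
import Mathlib

section
/- Let g = ⊕_{i∈ℤ} g^i be a finite-dimensional ℤ-graded semisimple Lie algebra over a field of characteristic zero. Then every minimal (simple) ideal I of g is a graded ideal, i.e. I = Σ_{i∈ℤ} (I ∩ g^i). Consequently, every graded semisimple Lie algebra is a direct sum of graded simple Lie algebras. -/
open scoped DirectSum

open scoped Classical in

/-- In a finite-dimensional ℤ-graded semisimple Lie algebra over a field
of characteristic zero, every minimal (simple) ideal `I` is graded:
`I = Σᵢ (I ∩ gⁱ)`.  Consequently `g` is the direct sum of its (graded simple) minimal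
ideals. -/
theorem minimal_ideal_is_graded
    {K L : Type*} [Field K] [CharZero K] [LieRing L] [LieAlgebra K L]
    [FiniteDimensional K L] [LieAlgebra.IsSemisimple K L]
    (g : ℤ → Submodule K L)
    (hg : DirectSum.IsInternal g)
    (hbracket : ∀ i j : ℤ, ∀ x ∈ g i, ∀ y ∈ g j, ⁅x, y⁆ ∈ g (i + j)) :
    (∀ I : LieIdeal K L, IsAtom I →
      (I : Submodule K L) = ⨆ i : ℤ, (I : Submodule K L) ⊓ g i) ∧
    DirectSum.IsInternal
      (fun J : {J : LieIdeal K L // IsAtom J} => ((J : LieIdeal K L) : Submodule K L)) := by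
  letI := hg.chooseDecomposition
  -- The grading derivation `D`, acting as multiplication by `i` on `g i`.
  let T : (⨁ i, g i) →ₗ[K] L := DirectSum.toModule K ℤ L (fun i => (i : K) • (g i).subtype)
  let D : Module.End K L := T ∘ₗ (DirectSum.decomposeLinearEquiv g).toLinearMap
  have hD : ∀ (i : ℤ), ∀ x ∈ g i, D x = (i : K) • x := by
    intro i x hx
    have h1 : DirectSum.decompose g x = DirectSum.of _ i ⟨x, hx⟩ :=
      DirectSum.decompose_of_mem g hx
    show T (DirectSum.decompose g x) = _
    rw [h1, ← DirectSum.lof_eq_of K, DirectSum.toModule_lof]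
    rfl
  -- `D` is a derivation.
  have hhom : ∀ (i j : ℤ), ∀ x ∈ g i, ∀ y ∈ g j, D ⁅x, y⁆ = ⁅D x, y⁆ + ⁅x, D y⁆ := by
    intro i j x hx y hy
    rw [hD i x hx, hD j y hy, hD (i + j) _ (hbracket i j x hx y hy),
      smul_lie, lie_smul, Int.cast_add, add_smul]
  have hder : ∀ x y : L, D ⁅x, y⁆ = ⁅D x, y⁆ + ⁅x, D y⁆ := by
    refine DirectSum.Decomposition.inductionOn g ?_ ?_ ?_
    · intro y; simp
    · rintro i ⟨x, hx⟩
      refine DirectSum.Decomposition.inductionOn g ?_ ?_ ?_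
      · simp
      · rintro j ⟨y, hy⟩; exact hhom i j x hx y hy
      · intro y₁ y₂ h1 h2; simp only [lie_add, map_add, h1, h2]; abel
    · intro x₁ x₂ h1 h2 y; simp only [add_lie, map_add, h1 y, h2 y]; abel
  -- Every atom (being perfect) is invariant under `D`.
  have hinv : ∀ I : LieIdeal K L, IsAtom I → ∀ x ∈ I, D x ∈ I := by
    intro I hI
    have hII : ⁅I, I⁆ = I :=
      lie_eq_self_of_isAtom_of_nonabelian I hI
        (LieAlgebra.IsSemisimple.non_abelian_of_isAtom I hI)
    let Wsub : Submodule K L := (I : Submodule K L) ⊓ (I : Submodule K L).comap D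
    have hW_lie : ∀ (x m : L), m ∈ Wsub → ⁅x, m⁆ ∈ Wsub := by
      intro x m hm
      obtain ⟨hm1, hm2⟩ := hm
      change m ∈ I at hm1; change D m ∈ I at hm2
      refine ⟨I.lie_mem hm1, Submodule.mem_comap.mpr ?_⟩
      show D ⁅x, m⁆ ∈ I
      rw [hder x m]
      exact I.add_mem (I.lie_mem hm1) (I.lie_mem hm2)
    let W : LieIdeal K L :=
      { Wsub with lie_mem := fun {x m} hm => hW_lie x m hm }
    have hIW : I ≤ W := by
      conv_lhs => rw [← hII]
      rw [LieSubmodule.lieIdeal_oper_eq_span]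
      rw [LieSubmodule.lieSpan_le]
      rintro z ⟨x, y, rfl⟩
      refine ⟨I.lie_mem y.2, Submodule.mem_comap.mpr ?_⟩
      show D ⁅(x : L), (y : L)⁆ ∈ I
      rw [hder]
      refine I.add_mem (I.lie_mem y.2) ?_
      rw [← lie_skew]
      exact I.neg_mem (I.lie_mem x.2)
    intro x hx
    exact ((hIW hx).2 : D x ∈ (I : Submodule K L))
  -- Homogeneous components of elements of a `D`-invariant subspace stay inside it.
  have hcomp : ∀ (S : Submodule K L), (∀ z ∈ S, D z ∈ S) →
      ∀ x ∈ S, ∀ i : ℤ, (DirectSum.decompose g x i : L) ∈ S := by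
    intro S hDS x hx i
    have hpow : ∀ (n : ℕ), ∀ z ∈ S, (D ^ n) z ∈ S := by
      intro n
      induction n with
      | zero => intro z hz; simpa using hz
      | succ n ih =>
        intro z hz
        rw [pow_succ, Module.End.mul_apply]
        exact ih _ (hDS z hz)
    have haev : ∀ (p : Polynomial K), ∀ z ∈ S, Polynomial.aeval D p z ∈ S := by
      intro p
      induction p using Polynomial.induction_on' with
      | add p q hp hq =>
        intro z hz
        rw [map_add, LinearMap.add_apply]
        exact S.add_mem (hp z hz) (hq z hz)
      | monomial n a =>
        intro z hz
        rw [Polynomial.aeval_monomial, Module.End.mul_apply, Module.algebraMap_end_apply]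
        exact S.smul_mem a (hpow n z hz)
    have heig : ∀ (j : ℤ) (p : Polynomial K),
        Polynomial.aeval D p (DirectSum.decompose g x j : L) =
          p.eval ((j : K)) • (DirectSum.decompose g x j : L) := by
      intro j p
      by_cases h0 : (DirectSum.decompose g x j : L) = 0
      · rw [h0]; simp
      · exact Module.End.aeval_apply_of_hasEigenvector
          ⟨Module.End.mem_eigenspace_iff.mpr (hD j _ (DirectSum.decompose g x j).2), h0⟩
    by_cases hi : i ∈ (DirectSum.decompose g x).support
    · set s := (DirectSum.decompose g x).support with hs
      set v : ℤ → K := fun j => (j : K) with hv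
      have hinj : Set.InjOn v s := fun a _ b _ h => Int.cast_injective h
      set p := Lagrange.basis s v i with hp
      have key : Polynomial.aeval D p x = (DirectSum.decompose g x i : L) := by
        conv_lhs => rw [← DirectSum.sum_support_decompose g x]
        rw [map_sum]
        rw [Finset.sum_congr rfl fun j _ => heig j p]
        rw [Finset.sum_eq_single i]
        · rw [hp, Lagrange.eval_basis_self hinj hi, one_smul]
        · intro j hj hji
          rw [hp, Lagrange.eval_basis_of_ne (Ne.symm hji) hj, zero_smul]
        · intro h; exact absurd hi h
      rw [← key]
      exact haev p x hx
    · rw [DFinsupp.notMem_support_iff.mp hi]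
      exact S.zero_mem
  constructor
  · -- Part 1: every atom is a graded ideal.
    intro I hI
    refine le_antisymm ?_ (iSup_le fun i => inf_le_left)
    intro x hx
    have hx' : x ∈ I := hx
    rw [← DirectSum.sum_support_decompose g x]
    refine Submodule.sum_mem _ fun j _ => Submodule.mem_iSup_of_mem j ?_
    exact ⟨hcomp (I : Submodule K L) (fun z hz => hinv I hI z hz) x hx' j,
      (DirectSum.decompose g x j).2⟩
  · -- Part 2: the atoms form an internal direct sum.
    rw [DirectSum.isInternal_submodule_iff_iSupIndep_and_iSup_eq_top]
    constructor
    · have h2 : sSupIndep {I : LieIdeal K L | IsAtom I} :=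
        LieAlgebra.IsSemisimple.sSupIndep_isAtom
      have h3 : iSupIndep (fun J : {J : LieIdeal K L // IsAtom J} => (J : LieIdeal K L)) :=
        (sSupIndep_iff _).mp h2
      exact LieSubmodule.iSupIndep_toSubmodule.mpr h3
    · have h1 : sSup {I : LieIdeal K L | IsAtom I} = ⊤ :=
        LieAlgebra.IsSemisimple.sSup_atoms_eq_top
      have h4 : (⨆ J : {J : LieIdeal K L // IsAtom J}, (J : LieIdeal K L)) = ⊤ := by
        rw [← h1]
        exact le_antisymm (iSup_le fun J => le_sSup J.2)
          (sSup_le fun I hI =>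
            le_iSup (fun J : {J : LieIdeal K L // IsAtom J} => (J : LieIdeal K L)) ⟨I, hI⟩)
      calc (⨆ J : {J : LieIdeal K L // IsAtom J}, ((J : LieIdeal K L) : Submodule K L))
          = ((⨆ J : {J : LieIdeal K L // IsAtom J}, (J : LieIdeal K L) : LieIdeal K L) :
              Submodule K L) := (LieSubmodule.iSup_toSubmodule _).symm
        _ = ⊤ := by rw [h4]; rfl
end

section
/- Realize the root system B_ℓ in ℝ^ℓ (ℓ ≥ 2) with simple roots α_h = e_h − e_{h+1} (1 ≤ h ≤ ℓ−1), α_ℓ = e_ℓ. Let Π¹ = {α_{i_1}, …, α_{i_k}} with i_1 < ⋯ < i_k and k ≥ 2. Then Π¹ is admissible if and only if i_k = i_{k−1} + 1. -/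
/-- In the root system `B_ℓ` with simple roots
`α_h = e_h - e_{h+1}` (`h < ℓ`), `α_ℓ = e_ℓ`, a subset
`Π¹ = {α_{i_1}, …, α_{i_k}}` (`i_1 < ⋯ < i_k`, `k ≥ 2`) is admissible (no root has
the form `2α + Σ k_i φ_i` with `α ∈ Π¹`, `φ_i ∈ Π \ Π¹`, `k_i ∈ ℕ`) iff
`i_k = i_{k-1} + 1`. -/
theorem B_ell_admissible_iff
    (ℓ : ℕ) (hℓ : 2 ≤ ℓ)
    (e : Fin ℓ → (Fin ℓ → ℝ))
    (he : ∀ i, e i = Pi.single i 1)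
    (α : Fin ℓ → (Fin ℓ → ℝ))
    (hα : ∀ (h : Fin ℓ) (hh : (h : ℕ) + 1 < ℓ), α h = e h - e ⟨(h : ℕ) + 1, hh⟩)
    (hαlast : α ⟨ℓ - 1, by omega⟩ = e ⟨ℓ - 1, by omega⟩)
    (R : Set (Fin ℓ → ℝ))
    (hR : R = {v | (∃ i j : Fin ℓ, i ≠ j ∧ v = e i - e j) ∨
        (∃ i j : Fin ℓ, i < j ∧ (v = e i + e j ∨ v = -(e i + e j))) ∨
        (∃ i : Fin ℓ, v = e i ∨ v = -(e i))})
    (k : ℕ) (hk : 2 ≤ k)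
    (idx : Fin k → Fin ℓ) (hidx : StrictMono idx)
    (Pi1 : Finset (Fin ℓ)) (hPi1 : ∀ h, h ∈ Pi1 ↔ ∃ t, idx t = h) :
    (¬ ∃ a ∈ Pi1, ∃ kf : Fin ℓ → ℕ, (∀ h, kf h ≠ 0 → h ∉ Pi1) ∧
        ((2 : ℝ) • α a + ∑ h, (kf h : ℝ) • α h) ∈ R) ↔
      (idx ⟨k - 1, by omega⟩ : ℕ) = (idx ⟨k - 2, by omega⟩ : ℕ) + 1 := by
  -- partial sums of single vectors
  have hsingle : ∀ (i p : Fin ℓ),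
      ∑ q ∈ Finset.Iic p, Pi.single i (1:ℝ) q = if (i:ℕ) ≤ (p:ℕ) then 1 else 0 := by
    intro i p
    rw [Finset.sum_pi_single']
    simp only [Finset.mem_Iic, Fin.le_def]
  -- partial sums of simple roots
  have hA : ∀ (h p : Fin ℓ), ∑ q ∈ Finset.Iic p, α h q = if h = p then 1 else 0 := by
    intro h p
    by_cases hh : (h:ℕ) + 1 < ℓ
    · rw [hα h hh, he, he]
      simp only [Pi.sub_apply, Finset.sum_sub_distrib, hsingle]
      rcases eq_or_ne h p with rfl | hne
      · simp
      · have : (h:ℕ) ≠ (p:ℕ) := fun hc => hne (Fin.ext hc)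
        simp only [if_neg hne]
        split_ifs <;> simp <;> omega
    · have hh' : (h:ℕ) = ℓ - 1 := by have := h.isLt; omega
      have heq : h = (⟨ℓ - 1, by omega⟩ : Fin ℓ) := Fin.ext (by simpa using hh')
      rw [heq, hαlast, he, hsingle]
      have hp := p.isLt
      rcases eq_or_ne ((⟨ℓ - 1, by omega⟩ : Fin ℓ)) p with hE | hne
      · rw [if_pos hE]
        rw [if_pos]
        rw [← hE]
      · have : (ℓ - 1 : ℕ) ≠ (p:ℕ) := fun hc => hne (Fin.ext (by simpa using hc))
        rw [if_neg hne, if_neg (by simp; omega)]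
  -- partial sums of combinations
  have hB : ∀ (C : Fin ℓ → ℝ) (p : Fin ℓ),
      ∑ q ∈ Finset.Iic p, (∑ h, C h • α h) q = C p := by
    intro C p
    have h1 : ∀ q : Fin ℓ, (∑ h, C h • α h) q = ∑ h, C h * α h q := by
      intro q; rw [Finset.sum_apply]; rfl
    simp only [h1]
    rw [Finset.sum_comm]
    simp only [← Finset.mul_sum, hA]
    simp
  -- injectivity from partial sums
  have hinj : ∀ v w : Fin ℓ → ℝ,
      (∀ p, ∑ q ∈ Finset.Iic p, v q = ∑ q ∈ Finset.Iic p, w q) → v = w := by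
    intro v w hS
    have key : ∀ n, ∀ p : Fin ℓ, (p:ℕ) = n → v p = w p := by
      intro n
      induction n using Nat.strong_induction_on with
      | _ n IH =>
        intro p hp
        have h1 : Finset.Iic p = insert p (Finset.Iio p) := (Finset.Iio_insert p).symm
        have h2 : ∑ q ∈ Finset.Iio p, v q = ∑ q ∈ Finset.Iio p, w q :=
          Finset.sum_congr rfl (fun q hq => by
            have : (q:ℕ) < n := by
              have := Finset.mem_Iio.mp hq
              rw [Fin.lt_def] at this; omega
            exact IH _ this q rfl)
        have h3 := hS p
        rw [h1, Finset.sum_insert (Finset.notMem_Iio_self),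
          Finset.sum_insert (Finset.notMem_Iio_self)] at h3
        linarith
    funext p
    exact key _ p rfl
  -- sums of e
  have hSe : ∀ (i p : Fin ℓ), ∑ q ∈ Finset.Iic p, e i q = if (i:ℕ) ≤ (p:ℕ) then 1 else 0 := by
    intro i p; rw [he]; exact hsingle i p
  -- partial sums of the candidate vector
  have hS : ∀ (a : Fin ℓ) (kf : Fin ℓ → ℕ) (p : Fin ℓ),
      ∑ q ∈ Finset.Iic p, ((2:ℝ) • α a + ∑ h, (kf h : ℝ) • α h) q
      = (if a = p then (2:ℝ) else 0) + (kf p : ℝ) := by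
    intro a kf p
    have h1 : ∀ q, ((2:ℝ) • α a + ∑ h, (kf h:ℝ) • α h) q
        = 2 * α a q + (∑ h, (fun h => (kf h:ℝ)) h • α h) q := fun q => rfl
    simp only [h1, Finset.sum_add_distrib, ← Finset.mul_sum, hA, hB (fun h => (kf h:ℝ))]
    split_ifs <;> ring
  have hkm : k - 2 < k - 1 := by omega
  set m : Fin ℓ := idx ⟨k - 1, by omega⟩ with hm_def
  set b : Fin ℓ := idx ⟨k - 2, by omega⟩ with hb_def
  have hbm : (b:ℕ) < (m:ℕ) := by
    have : (⟨k-2, by omega⟩ : Fin k) < ⟨k-1, by omega⟩ := by rw [Fin.lt_def]; simpa using hkm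
    exact Fin.lt_def.mp (hidx this)
  have hmmem : m ∈ Pi1 := (hPi1 m).mpr ⟨_, rfl⟩
  have hbmem : b ∈ Pi1 := (hPi1 b).mpr ⟨_, rfl⟩
  have hlem : ∀ a ∈ Pi1, (a:ℕ) ≤ (m:ℕ) := by
    intro a ha
    obtain ⟨t, rfl⟩ := (hPi1 a).mp ha
    have ht : t ≤ (⟨k-1, by omega⟩ : Fin k) := by
      rw [Fin.le_def]; have := t.isLt; simp; omega
    exact Fin.le_def.mp (hidx.monotone ht)
  have hml : (m:ℕ) < ℓ := m.isLt
  constructor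
  · -- admissible → consecutive
    intro hne
    by_contra hnc
    have hge : (b:ℕ) + 2 ≤ (m:ℕ) := by omega
    exfalso
    apply hne
    obtain ⟨kf, hkf_def⟩ : ∃ kf : Fin ℓ → ℕ, kf = fun (h : Fin ℓ) => if (h:ℕ) ≤ (b:ℕ) then 0 else
        if (h:ℕ) = (b:ℕ)+1 then 1 else if h = m then 0 else 2 := by
      exact ⟨_, rfl⟩
    have hkfval : ∀ h : Fin ℓ, kf h = if (h:ℕ) ≤ (b:ℕ) then 0 else
        if (h:ℕ) = (b:ℕ)+1 then 1 else if h = m then 0 else 2 := fun h => by rw [hkf_def]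
    refine ⟨m, hmmem, kf, ?_, ?_⟩
    · intro h hh hmem
      rw [hkfval] at hh
      obtain ⟨t, rfl⟩ := (hPi1 h).mp hmem
      by_cases ht : idx t = m
      · rw [ht, if_neg (by omega), if_neg (by omega), if_pos rfl] at hh
        exact hh rfl
      · have htk : t ≠ (⟨k-1, by omega⟩ : Fin k) := fun hc => ht (by rw [hc])
        have ht2 : t ≤ (⟨k-2, by omega⟩ : Fin k) := by
          rw [Fin.le_def]
          have h1 := t.isLt
          have h2 : (t:ℕ) ≠ k - 1 := fun hc => htk (Fin.ext (by simpa using hc))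
          simp; omega
        have hle' : (idx t : ℕ) ≤ (b:ℕ) := Fin.le_def.mp (hidx.monotone ht2)
        rw [if_pos hle'] at hh
        exact hh rfl
    · rw [hR]
      simp only [Set.mem_setOf_eq]
      right; left
      refine ⟨⟨(b:ℕ)+1, by omega⟩, ⟨(b:ℕ)+2, by omega⟩, by rw [Fin.lt_def]; simp, Or.inl ?_⟩
      apply hinj
      intro p
      refine (hS m kf p).trans ?_
      simp only [hkfval]
      have h4 : ∀ q, (e (⟨(b:ℕ)+1, by omega⟩ : Fin ℓ) + e (⟨(b:ℕ)+2, by omega⟩ : Fin ℓ)) q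
          = e (⟨(b:ℕ)+1, by omega⟩ : Fin ℓ) q + e (⟨(b:ℕ)+2, by omega⟩ : Fin ℓ) q := fun q => rfl
      simp only [h4, Finset.sum_add_distrib, hSe]
      have hpm : m = p ↔ (m:ℕ) = (p:ℕ) := Fin.ext_iff
      simp only [hpm, Fin.val_mk]
      split_ifs <;> push_cast <;> (try norm_num) <;> omega
  · -- consecutive → admissible
    intro hcons
    rintro ⟨a, ha, kf, hkf, hmem⟩
    have hkf0 : ∀ h ∈ Pi1, kf h = 0 := by
      intro h hh; by_contra hc; exact hkf h hc hh
    have hma : (a:ℕ) ≤ (m:ℕ) := hlem a ha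
    rw [hR] at hmem
    simp only [Set.mem_setOf_eq] at hmem
    rcases hmem with ⟨i, j, hij, hv⟩ | ⟨i, j, hij, hv | hv⟩ | ⟨i, hv | hv⟩
    · -- e i - e j
      have h2 := hS a kf a
      rw [hv] at h2
      have h3 : ∀ q, (e i - e j) q = e i q - e j q := fun q => rfl
      simp only [h3, Finset.sum_sub_distrib, hSe] at h2
      rw [hkf0 a ha] at h2
      simp only [eq_self_iff_true, if_true] at h2
      push_cast at h2
      split_ifs at h2 <;> norm_num at h2
    · -- e i + e j
      have hsum : ∀ p : Fin ℓ, (if a = p then (2:ℝ) else 0) + (kf p : ℝ)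
          = (if (i:ℕ) ≤ (p:ℕ) then (1:ℝ) else 0) + (if (j:ℕ) ≤ (p:ℕ) then 1 else 0) := by
        intro p
        have h2 := hS a kf p
        rw [hv] at h2
        have h3 : ∀ q, (e i + e j) q = e i q + e j q := fun q => rfl
        simp only [h3, Finset.sum_add_distrib, hSe] at h2
        exact h2.symm
      have hijn : (i:ℕ) < (j:ℕ) := Fin.lt_def.mp hij
      by_cases ham : a = m
      · have hb2 := hsum b
        have hm2 := hsum m
        have hab : a ≠ b := fun hc => by rw [hc] at ham; omega
        rw [if_neg hab, hkf0 b hbmem] at hb2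
        rw [if_pos ham, hkf0 m hmmem] at hm2
        push_cast at hb2 hm2
        split_ifs at hb2 <;> split_ifs at hm2 <;> norm_num at hb2 <;> norm_num at hm2 <;> omega
      · have ha2 := hsum a
        have hm2 := hsum m
        rw [hkf0 a ha] at ha2
        simp only [eq_self_iff_true, if_true] at ha2
        rw [if_neg ham, hkf0 m hmmem] at hm2
        push_cast at ha2 hm2
        have hamlt : (a:ℕ) < (m:ℕ) := by
          rcases lt_or_eq_of_le hma with h | h
          · exact h
          · exact absurd (Fin.ext h) ham
        split_ifs at ha2 <;> split_ifs at hm2 <;> norm_num at ha2 <;> norm_num at hm2 <;> omega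
    · -- -(e i + e j)
      have h2 := hS a kf a
      rw [hv] at h2
      have h3 : ∀ q, (-(e i + e j)) q = -(e i q + e j q) := fun q => rfl
      simp only [h3, Finset.sum_neg_distrib, Finset.sum_add_distrib, hSe] at h2
      rw [hkf0 a ha] at h2
      simp only [eq_self_iff_true, if_true] at h2
      push_cast at h2
      split_ifs at h2 <;> norm_num at h2
    · -- e i
      have h2 := hS a kf a
      rw [hv] at h2
      rw [hSe, if_pos rfl, hkf0 a ha] at h2
      push_cast at h2
      split_ifs at h2 <;> norm_num at h2
    · -- -e i
      have h2 := hS a kf a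
      rw [hv] at h2
      have h3 : ∀ q, (-(e i)) q = -(e i q) := fun q => rfl
      simp only [h3, Finset.sum_neg_distrib, hSe] at h2
      rw [hkf0 a ha] at h2
      simp only [eq_self_iff_true, if_true] at h2
      push_cast at h2
      split_ifs at h2 <;> norm_num at h2
end
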